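/- If in addition there exists c ∈ (a,b) such that ϕ'(θ) ≤ 0 for all θ ∈ (a,c] and ϕ'(θ) ≥ 0 for all θ ∈ [c,b), then for every fixed θ̃ ∈ (a,b) the function θ ↦ f₁(θ,θ̃) is monotone non-decreasing on (a,c] and monotone non-increasing on [c,b), where f₁(θ,θ̃) = v(θ,θ̃)² + ϕ(θ)⁻¹·(∂v/∂θ(θ,θ̃))² and ∂v/∂θ(θ,θ̃) = u_I'(θ)·u_II(θ̃) − u_I(θ̃)·u_II'(θ). -/

import Mathlib

/-- θ ↦ f₁(θ,θ̃) is non-decreasing on (a,c] and non-increasing on [c,b). -/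
theorem stmt_4 (a b : ℝ) (hab : a < b)
    (ϕ ϕd uI uId uIdd uII uIId uIIdd : ℝ → ℝ)
    (hϕd : ∀ θ ∈ Set.Ioo a b, HasDerivAt ϕ (ϕd θ) θ)
    (hϕdc : ContinuousOn ϕd (Set.Ioo a b))
    (hϕpos : ∀ θ ∈ Set.Ioo a b, 0 < ϕ θ)
    (huId : ∀ θ ∈ Set.Ioo a b, HasDerivAt uI (uId θ) θ)
    (huIdd : ∀ θ ∈ Set.Ioo a b, HasDerivAt uId (uIdd θ) θ)
    (huIId : ∀ θ ∈ Set.Ioo a b, HasDerivAt uII (uIId θ) θ)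
    (huIIdd : ∀ θ ∈ Set.Ioo a b, HasDerivAt uIId (uIIdd θ) θ)
    (hodeI : ∀ θ ∈ Set.Ioo a b, uIdd θ + ϕ θ * uI θ = 0)
    (hodeII : ∀ θ ∈ Set.Ioo a b, uIIdd θ + ϕ θ * uII θ = 0)
    (c : ℝ) (hc : c ∈ Set.Ioo a b)
    (hdec : ∀ θ ∈ Set.Ioc a c, ϕd θ ≤ 0)
    (hinc : ∀ θ ∈ Set.Ico c b, 0 ≤ ϕd θ) :
    ∀ θt ∈ Set.Ioo a b,
      MonotoneOn
        (fun t => (uI t * uII θt - uI θt * uII t) ^ 2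
            + (ϕ t)⁻¹ * (uId t * uII θt - uI θt * uIId t) ^ 2)
        (Set.Ioc a c) ∧
      AntitoneOn
        (fun t => (uI t * uII θt - uI θt * uII t) ^ 2
            + (ϕ t)⁻¹ * (uId t * uII θt - uI θt * uIId t) ^ 2)
        (Set.Ico c b) := by
  intro θt hθt
  set f : ℝ → ℝ := fun t => (uI t * uII θt - uI θt * uII t) ^ 2
            + (ϕ t)⁻¹ * (uId t * uII θt - uI θt * uIId t) ^ 2 with hfdef
  have key : ∀ x ∈ Set.Ioo a b,
      HasDerivAt f (-(ϕd x) * (uId x * uII θt - uI θt * uIId x) ^ 2 / (ϕ x) ^ 2) x := by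
    intro x hx
    have hϕx := hϕpos x hx
    have hw : HasDerivAt (fun t => uI t * uII θt - uI θt * uII t)
        (uId x * uII θt - uI θt * uIId x) x :=
      ((huId x hx).mul_const _).sub ((huIId x hx).const_mul _)
    have hwd : HasDerivAt (fun t => uId t * uII θt - uI θt * uIId t)
        (-(ϕ x) * (uI x * uII θt - uI θt * uII x)) x := by
      have h : HasDerivAt (fun t => uId t * uII θt - uI θt * uIId t) (uIdd x * uII θt - uI θt * uIIdd x) x := ((huIdd x hx).mul_const (uII θt)).sub ((huIIdd x hx).const_mul (uI θt))
      convert h using 1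
      have h1 := hodeI x hx
      have h2 := hodeII x hx
      linear_combination (-(uII θt)) * h1 + (uI θt) * h2
    have hinv : HasDerivAt (fun t => (ϕ t)⁻¹) (-(ϕd x) / (ϕ x) ^ 2) x :=
      (hϕd x hx).inv hϕx.ne'
    have hall := (hw.pow 2).add (hinv.mul (hwd.pow 2))
    convert hall using 1
    iterate 3 rfl
    simp only [Pi.pow_apply]
    field_simp
    ring
  have hsub1 : Set.Ioc a c ⊆ Set.Ioo a b := fun x hx => ⟨hx.1, lt_of_le_of_lt hx.2 hc.2⟩
  have hsub2 : Set.Ico c b ⊆ Set.Ioo a b := fun x hx => ⟨lt_of_lt_of_le hc.1 hx.1, hx.2⟩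
  constructor
  · apply monotoneOn_of_deriv_nonneg (convex_Ioc a c)
    · exact fun x hx => (key x (hsub1 hx)).continuousAt.continuousWithinAt
    · intro x hx
      rw [interior_Ioc] at hx
      exact (key x (hsub1 (Set.Ioo_subset_Ioc_self hx))).differentiableAt.differentiableWithinAt
    · intro x hx
      rw [interior_Ioc] at hx
      have hx' := hsub1 (Set.Ioo_subset_Ioc_self hx)
      rw [(key x hx').deriv]
      have h1 := hdec x (Set.Ioo_subset_Ioc_self hx)
      have h2 := sq_nonneg (uId x * uII θt - uI θt * uIId x)
      have : 0 ≤ -(ϕd x) := by linarith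
      exact div_nonneg (mul_nonneg this h2) (sq_nonneg _)
  · apply antitoneOn_of_deriv_nonpos (convex_Ico c b)
    · exact fun x hx => (key x (hsub2 hx)).continuousAt.continuousWithinAt
    · intro x hx
      rw [interior_Ico] at hx
      exact (key x (hsub2 (Set.Ioo_subset_Ico_self hx))).differentiableAt.differentiableWithinAt
    · intro x hx
      rw [interior_Ico] at hx
      have hx' := hsub2 (Set.Ioo_subset_Ico_self hx)
      rw [(key x hx').deriv]
      have h1 := hinc x (Set.Ioo_subset_Ico_self hx)
      have h2 := sq_nonneg (uId x * uII θt - uI θt * uIId x)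
      have hϕx := hϕpos x hx'
      have : -(ϕd x) ≤ 0 := by linarith
      exact div_nonpos_of_nonpos_of_nonneg (mul_nonpos_of_nonpos_of_nonneg this h2) (sq_nonneg _)
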